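/- Let B be a separable metrizable topological group that is not σ-compact and whose underlying topological space is homeomorphic to a G_δ-subset of a complete metric space. Then no subspace X of B having the Hurewicz property Ufin(O,Γ) generates B. -/

import Mathlib

open Set Filter Topology

universe u

/-- `c` is an open cover of the space `X`. -/
def IsOpenCover {X : Type u} [TopologicalSpace X] (c : Set (Set X)) : Prop :=
  (∀ U ∈ c, IsOpen U) ∧ ⋃₀ c = Set.univ

/-- The Hurewicz property `Ufin(O,Γ)`. -/
def HurewiczProp (X : Type u) [TopologicalSpace X] : Prop :=
  ∀ c : ℕ → Set (Set X), (∀ n, IsOpenCover (c n)) →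
    ∃ v : ℕ → Set (Set X), (∀ n, v n ⊆ c n ∧ (v n).Finite) ∧
      ∀ x : X, ∀ᶠ n in atTop, x ∈ ⋃₀ v n

/-- The Hurewicz property transfers across homeomorphisms. -/
lemma HurewiczProp.of_homeomorph {P Q : Type*} [TopologicalSpace P] [TopologicalSpace Q]
    (f : P ≃ₜ Q) (h : HurewiczProp P) : HurewiczProp Q := by
  intro c hc
  obtain ⟨v, hv, hcov⟩ := h (fun n => (Set.preimage f) '' (c n)) (by
    intro n
    refine ⟨?_, ?_⟩
    · rintro U ⟨V, hV, rfl⟩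
      exact ((hc n).1 V hV).preimage f.continuous
    · apply Set.eq_univ_of_forall
      intro x
      have hfx : f x ∈ ⋃₀ c n := by rw [(hc n).2]; trivial
      obtain ⟨V, hV, hxV⟩ := hfx
      exact ⟨f ⁻¹' V, ⟨V, hV, rfl⟩, hxV⟩)
  refine ⟨fun n => (Set.image f) '' (v n), fun n => ⟨?_, (hv n).2.image _⟩, ?_⟩
  · rintro U ⟨W, hW, rfl⟩
    obtain ⟨V, hV, rfl⟩ := (hv n).1 hW
    rwa [Set.image_preimage_eq _ f.surjective]
  · intro x
    filter_upwards [hcov (f.symm x)] with n hn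
    obtain ⟨W, hW, hxW⟩ := hn
    exact ⟨f '' W, ⟨W, hW, rfl⟩, ⟨f.symm x, hxW, f.apply_symm_apply x⟩⟩

/-- A Hurewicz subspace of a `Gδ`-subset of a complete metric space is contained in a
σ-compact subset of that `Gδ`-set. -/
lemma exists_sigmaCompact_of_hurewicz {Y : Type u} [MetricSpace Y] [CompleteSpace Y]
    (T : ℕ → Set Y) (hT : ∀ n, IsOpen (T n)) (A : Set Y) (hAs : A ⊆ ⋂ n, T n)
    (hA : HurewiczProp ↥A) :
    ∃ K : ℕ → Set Y, (∀ n, IsCompact (K n) ∧ K n ⊆ ⋂ m, T m) ∧ A ⊆ ⋃ n, K n := by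
  classical
  set c : ℕ → Set (Set ↥A) := fun n =>
    { U | ∃ z : Y, ∃ r : ℝ, 0 < r ∧ r ≤ (1/2 : ℝ) ^ n ∧
        Metric.closedBall z r ⊆ (⋂ j ≤ n, T j) ∧ U = Subtype.val ⁻¹' Metric.ball z r }
    with hc_def
  have hc : ∀ n, IsOpenCover (c n) := by
    intro n
    constructor
    · rintro U ⟨z, r, -, -, -, rfl⟩
      exact Metric.isOpen_ball.preimage continuous_subtype_val
    · apply Set.eq_univ_of_forall
      intro a
      have haW : (a : Y) ∈ ⋂ j ≤ n, T j := by
        have hmem := hAs a.2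
        simp only [Set.mem_iInter] at hmem ⊢
        exact fun j _ => hmem j
      have hW : IsOpen (⋂ j ≤ n, T j) :=
        (Set.finite_Iic n).isOpen_biInter fun j _ => hT j
      obtain ⟨ε, hε, hballε⟩ := Metric.isOpen_iff.1 hW _ haW
      set r := min (ε/2) ((1/2 : ℝ) ^ n) with hr_def
      have hr0 : 0 < r := lt_min (by linarith) (by positivity)
      refine ⟨Subtype.val ⁻¹' Metric.ball (a : Y) r,
        ⟨(a : Y), r, hr0, min_le_right _ _, ?_, rfl⟩, ?_⟩
      · exact (Metric.closedBall_subset_ball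
          (lt_of_le_of_lt (min_le_left _ _) (by linarith))).trans hballε
      · exact Metric.mem_ball_self hr0
  obtain ⟨v, hv, hcov⟩ := hA c hc
  have hvc : ∀ n, ∀ U, U ∈ v n → ∃ z : Y, ∃ r : ℝ, 0 < r ∧ r ≤ (1/2 : ℝ) ^ n ∧
      Metric.closedBall z r ⊆ (⋂ j ≤ n, T j) ∧ U = Subtype.val ⁻¹' Metric.ball z r :=
    fun n U hU => (hv n).1 hU
  choose z r hr0 hrle hball hUeq using hvc
  haveI : ∀ n, Finite ↥(v n) := fun n => (hv n).2.to_subtype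
  set G : ℕ → Set Y := fun n => ⋃ U : ↥(v n), Metric.ball (z n U.1 U.2) (r n U.1 U.2)
    with hG_def
  have hGsub : ∀ n, closure (G n) ⊆
      ⋃ U : ↥(v n), Metric.closedBall (z n U.1 U.2) (r n U.1 U.2) := by
    intro n
    refine closure_minimal (Set.iUnion_mono fun U => Metric.ball_subset_closedBall) ?_
    exact isClosed_iUnion_of_finite fun U => Metric.isClosed_closedBall
  set K : ℕ → Set Y := fun m => ⋂ n, ⋂ (_ : m ≤ n), closure (G n) with hK_def
  have hKsub : ∀ m n, m ≤ n → K m ⊆ closure (G n) := by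
    intro m n h x hx
    simp only [hK_def, Set.mem_iInter] at hx
    exact hx n h
  refine ⟨K, fun m => ⟨?_, ?_⟩, ?_⟩
  · -- compactness
    apply TotallyBounded.isCompact_of_isClosed
    · rw [Metric.totallyBounded_iff]
      intro ε hε
      obtain ⟨n0, hn0⟩ := exists_pow_lt_of_lt_one hε (by norm_num : (1/2 : ℝ) < 1)
      refine ⟨Set.range fun U : ↥(v (max m n0)) => z _ U.1 U.2, Set.finite_range _, ?_⟩
      intro x hx
      have hx' := hGsub (max m n0) (hKsub m (max m n0) (le_max_left _ _) hx)
      rw [Set.mem_iUnion] at hx'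
      obtain ⟨U, hU⟩ := hx'
      simp only [Set.mem_iUnion]
      refine ⟨z _ U.1 U.2, ⟨U, rfl⟩, ?_⟩
      have h1 : dist x (z _ U.1 U.2) ≤ r _ U.1 U.2 := Metric.mem_closedBall.1 hU
      have h2 : r _ U.1 U.2 ≤ (1/2 : ℝ) ^ (max m n0) := hrle _ U.1 U.2
      have h3 : (1/2 : ℝ) ^ (max m n0) ≤ (1/2 : ℝ) ^ n0 :=
        pow_le_pow_of_le_one (by norm_num) (by norm_num) (le_max_right _ _)
      exact Metric.mem_ball.2 (by linarith)
    · exact isClosed_iInter fun n => isClosed_iInter fun _ => isClosed_closure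
  · -- inside the Gδ set
    intro x hx
    simp only [Set.mem_iInter]
    intro j
    have h1 : x ∈ closure (G (max m j)) := hKsub m _ (le_max_left _ _) hx
    have h2 := hGsub _ h1
    rw [Set.mem_iUnion] at h2
    obtain ⟨U, hU⟩ := h2
    have h3 := hball _ U.1 U.2 hU
    simp only [Set.mem_iInter] at h3
    exact h3 j (le_max_right m j)
  · -- covering
    intro a ha
    obtain ⟨m, hm⟩ := eventually_atTop.1 (hcov ⟨a, ha⟩)
    refine Set.mem_iUnion.2 ⟨m, ?_⟩
    simp only [hK_def, Set.mem_iInter]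
    intro n hn
    obtain ⟨U, hU, haU⟩ := hm n hn
    apply subset_closure
    refine Set.mem_iUnion.2 ⟨⟨U, hU⟩, ?_⟩
    rw [hUeq n U hU] at haU
    exact haU

open Pointwise in
/-- If a σ-compact subset generates a topological group, the group is σ-compact. -/
lemma sigmaCompact_of_generates {B : Type u} [TopologicalSpace B] [Group B]
    [IsTopologicalGroup B] (K : ℕ → Set B) (hK : ∀ n, IsCompact (K n)) (X : Set B)
    (hX : X ⊆ ⋃ n, K n) (h : Subgroup.closure X = ⊤) :
    ∃ L : ℕ → Set B, (∀ n, IsCompact (L n)) ∧ ⋃ n, L n = Set.univ := by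
  classical
  set Q : ℕ → Set B := fun n => (⋃ i ∈ Set.Iic n, (K i ∪ (K i)⁻¹)) ∪ {1} with hQ_def
  have hQcompact : ∀ n, IsCompact (Q n) := fun n =>
    (((Set.finite_Iic n).isCompact_biUnion fun i _ => (hK i).union (hK i).inv).union
      isCompact_singleton)
  have hQone : ∀ n, (1 : B) ∈ Q n := fun n => Or.inr rfl
  have hQmono : ∀ {a b : ℕ}, a ≤ b → Q a ⊆ Q b := by
    intro a b hab
    exact Set.union_subset_union
      (Set.biUnion_subset_biUnion_left (Set.Iic_subset_Iic.2 hab)) subset_rfl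
  have hQinv_sub : ∀ n, (Q n)⁻¹ ⊆ Q n := by
    intro n x hx
    rw [Set.mem_inv] at hx
    rcases hx with hx | hx
    · rw [Set.mem_iUnion₂] at hx
      obtain ⟨i, hi, hxi⟩ := hx
      rcases hxi with hxi | hxi
      · exact Or.inl (Set.mem_biUnion hi (Or.inr (Set.mem_inv.2 hxi)))
      · rw [Set.mem_inv, inv_inv] at hxi
        exact Or.inl (Set.mem_biUnion hi (Or.inl hxi))
    · rw [Set.mem_singleton_iff] at hx
      have hx1 : x = 1 := by simpa using congrArg Inv.inv hx
      exact Or.inr (Set.mem_singleton_iff.2 hx1)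
  have hQinv : ∀ n, (Q n)⁻¹ = Q n := by
    intro n
    apply Set.Subset.antisymm (hQinv_sub n)
    intro x hx
    rw [Set.mem_inv]
    exact hQinv_sub n (by rwa [Set.mem_inv, inv_inv])
  have hpow : ∀ (s : Set B), IsCompact s → ∀ k : ℕ, IsCompact (s ^ (k + 1)) := by
    intro s hs k
    induction k with
    | zero => simpa [pow_one] using hs
    | succ k ih => rw [pow_succ]; exact ih.mul hs
  set L : ℕ → Set B := fun n => Q n ^ (n + 1) with hL_def
  have hLmono : ∀ {a b : ℕ}, a ≤ b → L a ⊆ L b := fun {a b} hab =>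
    Set.pow_subset_pow (hQmono hab) (hQone b) (by omega)
  let S : Subgroup B :=
    { carrier := ⋃ n, L n
      one_mem' := Set.mem_iUnion.2 ⟨0, by simpa [hL_def, pow_one] using hQone 0⟩
      mul_mem' := by
        intro a b ha hb
        obtain ⟨m, ham⟩ := Set.mem_iUnion.1 ha
        obtain ⟨n, hbn⟩ := Set.mem_iUnion.1 hb
        have ha' : a ∈ Q (max m n) ^ (max m n + 1) := hLmono (le_max_left m n) ham
        have hb' : b ∈ Q (max m n) ^ (max m n + 1) := hLmono (le_max_right m n) hbn
        have hab : a * b ∈ Q (max m n) ^ ((max m n + 1) + (max m n + 1)) := by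
          rw [pow_add]
          exact Set.mul_mem_mul ha' hb'
        refine Set.mem_iUnion.2 ⟨2 * max m n + 1, ?_⟩
        exact Set.pow_subset_pow (hQmono (by omega)) (hQone _) (by omega) hab
      inv_mem' := by
        intro a ha
        obtain ⟨n, han⟩ := Set.mem_iUnion.1 ha
        refine Set.mem_iUnion.2 ⟨n, ?_⟩
        have h1 : a⁻¹ ∈ (Q n ^ (n + 1))⁻¹ := Set.inv_mem_inv.2 han
        rwa [← inv_pow, hQinv n] at h1 }
  have hXsub : X ⊆ ⋃ n, L n := by
    intro x hx
    obtain ⟨i, hxi⟩ := Set.mem_iUnion.1 (hX hx)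
    refine Set.mem_iUnion.2 ⟨i, ?_⟩
    have h1 : x ∈ Q i := Or.inl (Set.mem_biUnion (Set.mem_Iic.2 le_rfl) (Or.inl hxi))
    have h2 : Q i ^ 1 ⊆ Q i ^ (i + 1) := Set.pow_subset_pow_right (hQone i) (by omega)
    rw [pow_one] at h2
    exact h2 h1
  have hle : Subgroup.closure X ≤ S := (Subgroup.closure_le S).2 hXsub
  rw [h] at hle
  refine ⟨L, fun n => hpow _ (hQcompact n) n, Set.eq_univ_of_forall fun b => ?_⟩
  exact hle (Subgroup.mem_top b)

/-- A separable metrizable non-σ-compact topological group homeomorphic to a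
`Gδ`-subset of a complete metric space is not generated by any of its Hurewicz
subspaces. -/
theorem stmt_8 (B : Type u) [TopologicalSpace B] [Group B] [IsTopologicalGroup B]
    [TopologicalSpace.SeparableSpace B] [TopologicalSpace.MetrizableSpace B]
    (hnotsc : ¬ ∃ K : ℕ → Set B, (∀ n, IsCompact (K n)) ∧ ⋃ n, K n = Set.univ)
    (Y : Type u) [MetricSpace Y] [CompleteSpace Y]
    (T : ℕ → Set Y) (hT : ∀ n, IsOpen (T n)) (e : B ≃ₜ ↥(⋂ n, T n)) :
    ∀ X : Set B, HurewiczProp ↥X → Subgroup.closure X ≠ ⊤ := by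
  intro X hX h
  let f : ↥X → Y := fun x => ((e x.1 : ↥(⋂ n, T n)) : Y)
  have hfemb : Topology.IsEmbedding f := by
    have h1 : Topology.IsEmbedding (fun x : ↥X => (x : B)) := Topology.IsEmbedding.subtypeVal
    have h2 : Topology.IsEmbedding (e : B → ↥(⋂ n, T n)) := e.isEmbedding
    have h3 : Topology.IsEmbedding (fun y : ↥(⋂ n, T n) => (y : Y)) :=
      Topology.IsEmbedding.subtypeVal
    exact (h3.comp h2).comp h1
  have hA : HurewiczProp ↥(Set.range f) :=
    HurewiczProp.of_homeomorph (Topology.IsEmbedding.toHomeomorph (f := f) hfemb) hX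
  have hAs : Set.range f ⊆ ⋂ n, T n := by rintro y ⟨x, rfl⟩; exact (e x.1).2
  obtain ⟨K, hK, hcov⟩ := exists_sigmaCompact_of_hurewicz T hT (Set.range f) hAs hA
  have hMcompact : ∀ n, IsCompact (e.symm '' (Subtype.val ⁻¹' K n)) := by
    intro n
    have h1 : IsCompact (Subtype.val ⁻¹' K n : Set ↥(⋂ n, T n)) := by
      rw [Topology.IsEmbedding.isCompact_iff Topology.IsEmbedding.subtypeVal]
      rw [Set.image_preimage_eq_inter_range, Subtype.range_coe]
      rw [Set.inter_eq_self_of_subset_left (hK n).2]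
      exact (hK n).1
    exact h1.image e.symm.continuous
  have hXM : X ⊆ ⋃ n, e.symm '' (Subtype.val ⁻¹' K n) := by
    intro x hx
    obtain ⟨n, hn⟩ := Set.mem_iUnion.1 (hcov ⟨⟨x, hx⟩, rfl⟩)
    exact Set.mem_iUnion.2 ⟨n, ⟨e x, hn, e.symm_apply_apply x⟩⟩
  obtain ⟨L, hL, hLuniv⟩ := sigmaCompact_of_generates _ hMcompact X hXM h
  exact hnotsc ⟨L, hL, hLuniv⟩
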